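/- Let λ̄ be the algebra homomorphism on Z⟨a,b⟩ with λ̄(a) = 0 and λ̄(b) = a − b. For any graded poset P of rank n+1, λ̄(Ψ(P)) = (−1)^{n+1} · μ(0̂, 1̂) · (a − b)^n. -/

import Mathlib

open scoped TensorProduct
open scoped Classical

noncomputable section

abbrev Alg : Type := MonoidAlgebra ℤ (FreeMonoid Bool)

def va : Alg := MonoidAlgebra.of ℤ (FreeMonoid Bool) (FreeMonoid.of false)
def vb : Alg := MonoidAlgebra.of ℤ (FreeMonoid Bool) (FreeMonoid.of true)

def monoOf (l : List Bool) : Alg := MonoidAlgebra.of ℤ (FreeMonoid Bool) (FreeMonoid.ofList l)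

def toF (x : Alg) : FreeMonoid Bool →₀ ℤ := x.coeff

/-- The weight of a chain encoded as a strictly increasing map `f : Fin (k+1) → P`. -/
def wtChain {P : Type} (ρ : P → ℕ) {k : ℕ} (f : Fin (k+1) → P) : Alg :=
  (List.ofFn (fun i : Fin k =>
    (va - vb) ^ (ρ (f i.succ) - ρ (f i.castSucc) - 1) *
      (if (i : ℕ) + 1 < k then vb else 1))).prod

def zetaChain {P : Type} (zb : P → P → ℤ) {k : ℕ} (f : Fin (k+1) → P) : ℤ :=
  ∏ i : Fin k, zb (f i.castSucc) (f i.succ)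

/-- The ab-index of the interval `[lo, hi]` of a quasi-graded poset `(P, ρ, zb)`. -/
def PsiI {P : Type} [Fintype P] [PartialOrder P] (ρ : P → ℕ) (zb : P → P → ℤ)
    (lo hi : P) : Alg :=
  ∑ k ∈ Finset.range (Fintype.card P + 1),
    ∑ f : Fin (k+1) → P,
      if StrictMono f ∧ f 0 = lo ∧ f (Fin.last k) = hi
      then zetaChain zb f • wtChain ρ f else 0

/-- The algebra map `κ` with `κ(a) = a - b`, `κ(b) = 0`. -/
def kappa : Alg →ₐ[ℤ] Alg :=
  MonoidAlgebra.lift ℤ Alg (FreeMonoid Bool)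
    (FreeMonoid.lift (fun s => if s then 0 else va - vb))

/-- The algebra map `λ̄` with `λ̄(a) = 0`, `λ̄(b) = a - b`. -/
def lambdabar : Alg →ₐ[ℤ] Alg :=
  MonoidAlgebra.lift ℤ Alg (FreeMonoid Bool)
    (FreeMonoid.lift (fun s => if s then va - vb else 0))

/-- `η` on monomials: `b^m a^k ↦ 2 (a-b)^(m+k)`, other monomials to `0`. -/
def etaMon (w : FreeMonoid Bool) : Alg :=
  if ∃ m k : ℕ, FreeMonoid.toList w = List.replicate m true ++ List.replicate k false
  then (2 : ℤ) • (va - vb) ^ (FreeMonoid.toList w).length else 0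

def etaOp (x : Alg) : Alg := (toF x).sum fun w c => c • etaMon w

/-- The letter-deletion coproduct on `Z⟨a,b⟩`. -/
def Delta (x : Alg) : Alg ⊗[ℤ] Alg :=
  (toF x).sum fun w c => c •
    ∑ i ∈ Finset.range (FreeMonoid.toList w).length,
      monoOf ((FreeMonoid.toList w).take i) ⊗ₜ[ℤ] monoOf ((FreeMonoid.toList w).drop (i+1))

/-- The Sweedler-style convolution `x ↦ Σ F(x₍₁₎) · b · G(x₍₂₎)`. -/
def sweedler (F G : Alg → Alg) (x : Alg) : Alg :=
  (toF x).sum fun w c => c •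
    ∑ i ∈ Finset.range (FreeMonoid.toList w).length,
      F (monoOf ((FreeMonoid.toList w).take i)) * vb *
        G (monoOf ((FreeMonoid.toList w).drop (i+1)))

/-- `phiAux n = φ_{n+1}`, defined by `φ₁ = κ` and `φ_{k+1}(w) = Σ φ_k(w₍₁₎) · b · η(w₍₂₎)`. -/
def phiAux : ℕ → Alg → Alg
  | 0 => fun x => kappa x
  | (n+1) => fun x => sweedler (phiAux n) etaOp x

def maxLen (x : Alg) : ℕ := (toF x).support.sup fun w => (FreeMonoid.toList w).length

/-- The operator `φ = Σ_{k ≥ 1} φ_k` (the sum is finite on any given polynomial). -/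
def phi (x : Alg) : Alg := ∑ k ∈ Finset.range (maxLen x + 1), phiAux k x

/-- `ω` on a monomial: replace each occurrence of `ab` by `2d` and remaining letters by `c`. -/
def omegaList : List Bool → Alg
  | [] => 1
  | false :: true :: rest => ((2:ℤ) • (va * vb + vb * va)) * omegaList rest
  | _ :: rest => (va + vb) * omegaList rest

def omegaOp (x : Alg) : Alg := (toF x).sum fun w c => c • omegaList (FreeMonoid.toList w)

/-- The operator `G(w) = φ(w)·b + Σ φ(w₍₁₎)·b·λ̄(w₍₂₎)·(a-b)`. -/
def Gop (w : Alg) : Alg := phi w * vb + sweedler phi (fun y => lambdabar y) w * (va - vb)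

/-- The reversal map `u ↦ u*` reading each monomial backwards. -/
def revOp (x : Alg) : Alg :=
  (toF x).sum fun w c =>
    MonoidAlgebra.single (FreeMonoid.ofList (FreeMonoid.toList w).reverse) c

/-- `H'` deletes the last letter of each monomial, `H'(1) = 0`. -/
def Hp (x : Alg) : Alg :=
  (toF x).sum fun w c => if w = 1 then 0 else c • monoOf ((FreeMonoid.toList w).dropLast)

end
noncomputable section AuxLemmas

open Finset

lemma list_prod_zsmul_pow (x : Alg) (l : List (ℤ × ℕ)) :
    (l.map (fun p => p.1 • x ^ p.2)).prod
      = (l.map Prod.fst).prod • x ^ (l.map Prod.snd).sum := by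
  induction l with
  | nil => simp
  | cons a l ih =>
    simp only [List.map_cons, List.prod_cons, List.sum_cons, ih, pow_add,
      smul_mul_smul_comm]

lemma lambdabar_va : lambdabar va = 0 := by
  simp [lambdabar, va, MonoidAlgebra.lift_of]

lemma lambdabar_vb : lambdabar vb = va - vb := by
  simp [lambdabar, vb, MonoidAlgebra.lift_of]

lemma neg_pow_zsmul (x : Alg) (m : ℕ) : (-x) ^ m = ((-1 : ℤ) ^ m) • x ^ m := by
  rw [neg_pow, zsmul_eq_mul]
  push_cast
  ring_nf

lemma strictMono_fin_one {α : Type*} [Preorder α] (f : Fin (0+1) → α) : StrictMono f := by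
  intro i j hij
  rw [Fin.lt_def] at hij
  have hi := i.2
  have hj := j.2
  omega

lemma fin_last_zero_eq : (Fin.last 0) = (0 : Fin (0+1)) := by
  ext; simp

section Poset

variable {P : Type} [Fintype P] [PartialOrder P]

lemma rho_strict (ρ : P → ℕ) (hgrade : ∀ x y : P, x ⋖ y → ρ y = ρ x + 1) :
    ∀ y x : P, x < y → ρ x < ρ y := by
  intro y x
  induction x using IsWellFounded.induction (α := P) (· > ·) with
  | _ x IH =>
    intro hxy
    obtain ⟨z, hcov, hzy⟩ := exists_covBy_le_of_lt hxy
    have hz := hgrade x z hcov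
    rcases eq_or_lt_of_le hzy with rfl | hlt
    · omega
    · have := IH z hcov.lt hlt
      omega

/-- The signed chain count at a fixed length. -/
def chainSum (lo hi : P) (k : ℕ) : ℤ :=
  ∑ f : Fin (k+1) → P,
    if StrictMono f ∧ f 0 = lo ∧ f (Fin.last k) = hi then (-1 : ℤ) ^ k else 0

/-- The total signed chain count. -/
def Hfun (lo hi : P) : ℤ :=
  ∑ k ∈ Finset.range (Fintype.card P + 1), chainSum lo hi k

lemma chainSum_card (lo hi : P) : chainSum lo hi (Fintype.card P) = 0 := by
  apply Finset.sum_eq_zero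
  intro f _
  rw [if_neg]
  rintro ⟨hf, -, -⟩
  have := Fintype.card_le_of_injective f hf.injective
  simp [Fintype.card_fin] at this

lemma chainSum_zero_self (lo : P) : chainSum lo lo 0 = 1 := by
  rw [chainSum, Fintype.sum_equiv
    (⟨fun f => f 0, fun x _ => x,
      fun f => funext fun i => congrArg f (by ext; omega),
      fun x => rfl⟩ : (Fin (0+1) → P) ≃ P) _
    (fun x => if x = lo then ((-1 : ℤ)) ^ 0 else 0)]
  · simp
  · intro f
    have h2 : f (Fin.last 0) = f 0 := congrArg f fin_last_zero_eq
    simp only [Equiv.coe_fn_mk, strictMono_fin_one f, true_and, h2, and_self]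

lemma chainSum_zero_of_ne (lo hi : P) (h : lo ≠ hi) : chainSum lo hi 0 = 0 := by
  apply Finset.sum_eq_zero
  intro f _
  rw [if_neg]
  rintro ⟨-, h0, hl⟩
  refine h ?_
  rw [← h0, ← hl]
  exact congrArg f fin_last_zero_eq.symm

lemma chainSum_pos_self (lo : P) (k : ℕ) : chainSum lo lo (k+1) = 0 := by
  apply Finset.sum_eq_zero
  intro f _
  rw [if_neg]
  rintro ⟨hf, h0, hl⟩
  have h : (0 : Fin (k+2)) < Fin.last (k+1) := by
    rw [Fin.lt_def]
    simp [Fin.last]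
  have h' := hf h
  rw [h0, hl] at h'
  exact lt_irrefl lo h'

lemma strictMono_snoc_iff {j : ℕ} (g : Fin (j+1) → P) (x : P) :
    StrictMono (Fin.snoc g x : Fin (j+2) → P) ↔ StrictMono g ∧ g (Fin.last j) < x := by
  constructor
  · intro h
    refine ⟨?_, ?_⟩
    · have hg : g = (Fin.snoc g x : Fin (j+2) → P) ∘ Fin.castSucc := by
        funext i; simp
      rw [hg]
      exact h.comp Fin.strictMono_castSucc
    · have hlt : (Fin.last j).castSucc < Fin.last (j+1) := Fin.castSucc_lt_last _
      have := h hlt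
      simpa using this
  · rintro ⟨hg, hlast⟩
    rw [Fin.strictMono_iff_lt_succ]
    intro i
    refine Fin.lastCases ?_ ?_ i
    · have h1 : (Fin.last j).succ = Fin.last (j+1) := by
        ext; simp
      rw [h1, Fin.snoc_castSucc, Fin.snoc_last]
      exact hlast
    · intro i'
      have h2 : (i'.castSucc).succ = (i'.succ).castSucc := Fin.succ_castSucc i'
      rw [h2, Fin.snoc_castSucc, Fin.snoc_castSucc]
      exact hg Fin.castSucc_lt_succ

variable [LocallyFiniteOrder P]

lemma chainSum_succ (lo hi : P) (j : ℕ) :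
    chainSum lo hi (j+1) = -∑ x ∈ Finset.Ico lo hi, chainSum lo x j := by
  classical
  have hsnoc : ∀ (g : Fin (j+1) → P) (x : P),
      (StrictMono (Fin.snoc g x : Fin (j+2) → P) ∧ (Fin.snoc g x : Fin (j+2) → P) 0 = lo ∧
        (Fin.snoc g x : Fin (j+2) → P) (Fin.last (j+1)) = hi)
      ↔ (x = hi ∧ (StrictMono g ∧ g 0 = lo ∧ g (Fin.last j) < hi)) := by
    intro g x
    have h0 : (Fin.snoc g x : Fin (j+2) → P) 0 = g 0 := by
      have he : (0 : Fin (j+2)) = (0 : Fin (j+1)).castSucc := by ext; simp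
      rw [he, Fin.snoc_castSucc]
    rw [strictMono_snoc_iff, h0, Fin.snoc_last]
    constructor
    · rintro ⟨⟨hg, hlt⟩, hlo, rfl⟩
      exact ⟨rfl, hg, hlo, hlt⟩
    · rintro ⟨rfl, hg, hlo, hlt⟩
      exact ⟨⟨hg, hlt⟩, hlo, rfl⟩
  calc chainSum lo hi (j+1)
      = ∑ p : P × (Fin (j+1) → P),
          if StrictMono (Fin.snoc p.2 p.1 : Fin (j+2) → P) ∧
            (Fin.snoc p.2 p.1 : Fin (j+2) → P) 0 = lo ∧
            (Fin.snoc p.2 p.1 : Fin (j+2) → P) (Fin.last (j+1)) = hi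
          then (-1 : ℤ) ^ (j+1) else 0 := by
        rw [chainSum]
        exact (Fintype.sum_equiv (Fin.snocEquiv (fun _ : Fin (j+2) => P))
          (fun p => if StrictMono (Fin.snoc p.2 p.1 : Fin (j+2) → P) ∧
              (Fin.snoc p.2 p.1 : Fin (j+2) → P) 0 = lo ∧
              (Fin.snoc p.2 p.1 : Fin (j+2) → P) (Fin.last (j+1)) = hi
            then (-1 : ℤ) ^ (j+1) else 0)
          (fun f => if StrictMono f ∧ f 0 = lo ∧ f (Fin.last (j+1)) = hi
            then (-1 : ℤ) ^ (j+1) else 0)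
          (fun p => rfl)).symm
    _ = ∑ g : Fin (j+1) → P, ∑ x : P,
          if x = hi ∧ (StrictMono g ∧ g 0 = lo ∧ g (Fin.last j) < hi)
          then (-1 : ℤ) ^ (j+1) else 0 := by
        rw [Fintype.sum_prod_type, Finset.sum_comm]
        simp only [hsnoc]
    _ = ∑ g : Fin (j+1) → P,
          (if StrictMono g ∧ g 0 = lo ∧ g (Fin.last j) < hi
          then (-1 : ℤ) ^ (j+1) else 0) := by
        refine Finset.sum_congr rfl fun g _ => ?_
        by_cases hD : StrictMono g ∧ g 0 = lo ∧ g (Fin.last j) < hi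
        · simp [hD]
        · simp [hD]
    _ = ∑ g : Fin (j+1) → P, ∑ x ∈ Finset.Ico lo hi,
          (if StrictMono g ∧ g 0 = lo ∧ g (Fin.last j) = x
            then (-1 : ℤ) ^ (j+1) else 0) := by
        refine Finset.sum_congr rfl fun g _ => ?_
        by_cases hE : StrictMono g ∧ g 0 = lo
        · have hmem : g (Fin.last j) < hi ↔ g (Fin.last j) ∈ Finset.Ico lo hi := by
            rw [Finset.mem_Ico, iff_and_self]
            intro _
            rw [← hE.2]
            exact hE.1.monotone (Fin.zero_le _)
          simp only [hE.1, hE.2, true_and]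
          rw [Finset.sum_ite_eq (Finset.Ico lo hi) (g (Fin.last j))
            (fun _ => (-1 : ℤ) ^ (j+1))]
          exact if_congr hmem rfl rfl
        · have h1 : ¬(StrictMono g ∧ g 0 = lo ∧ g (Fin.last j) < hi) := by
            rintro ⟨a, b, -⟩; exact hE ⟨a, b⟩
          rw [if_neg h1]
          refine (Finset.sum_eq_zero fun x _ => ?_).symm
          rw [if_neg]
          rintro ⟨a, b, -⟩; exact hE ⟨a, b⟩
    _ = -∑ x ∈ Finset.Ico lo hi, chainSum lo x j := by
        have key : ∀ x : P, (∑ g : Fin (j+1) → P,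
            if StrictMono g ∧ g 0 = lo ∧ g (Fin.last j) = x
            then ((-1:ℤ))^(j+1) else 0) = -chainSum lo x j := by
          intro x
          rw [chainSum, ← Finset.sum_neg_distrib]
          refine Finset.sum_congr rfl fun g _ => ?_
          split <;> simp [pow_succ]
        rw [Finset.sum_comm, Finset.sum_congr rfl (fun x _ => key x),
          Finset.sum_neg_distrib]

lemma Hfun_self (lo : P) : Hfun lo lo = 1 := by
  rw [Hfun, Finset.sum_range_succ']
  simp [chainSum_pos_self, chainSum_zero_self]

lemma Hfun_of_ne (lo hi : P) (h : lo ≠ hi) :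
    Hfun lo hi = -∑ x ∈ Finset.Ico lo hi, Hfun lo x := by
  rw [Hfun, Finset.sum_range_succ', chainSum_zero_of_ne lo hi h, add_zero]
  rw [Finset.sum_congr rfl (fun j _ => chainSum_succ lo hi j),
    Finset.sum_neg_distrib, Finset.sum_comm]
  congr 1
  refine Finset.sum_congr rfl fun x _ => ?_
  rw [Hfun, Finset.sum_range_succ, chainSum_card, add_zero]

lemma Hfun_eq_mu [DecidableEq P] (lo : P) :
    ∀ hi, lo ≤ hi → Hfun lo hi = IncidenceAlgebra.mu ℤ lo hi := by
  intro hi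
  induction hi using WellFoundedLT.induction with
  | _ hi IH =>
    intro hle
    rcases eq_or_ne lo hi with rfl | hne
    · simp [Hfun_self]
    · rw [Hfun_of_ne lo hi hne, IncidenceAlgebra.mu_eq_neg_sum_Ico_of_ne hne]
      congr 1
      refine Finset.sum_congr rfl fun x hx => ?_
      rw [Finset.mem_Ico] at hx
      exact IH x hx.2 hx.1

end Poset

lemma sum_ite_lt (k : ℕ) (hk : 1 ≤ k) :
    (∑ i : Fin k, (if (i : ℕ) + 1 < k then 1 else 0)) = k - 1 := by
  cases k with
  | zero => omega
  | succ k' =>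
    rw [Fin.sum_univ_eq_sum_range (fun j => if j + 1 < k' + 1 then 1 else 0) (k'+1)]
    rw [Finset.sum_range_succ]
    have h : ∀ j ∈ Finset.range k', (if j + 1 < k' + 1 then 1 else 0) = 1 := by
      intro j hj
      rw [Finset.mem_range] at hj
      rw [if_pos (by omega)]
    rw [Finset.sum_congr rfl h, Finset.sum_const, Finset.card_range]
    simp

lemma sum_rho_gaps {P : Type} [PartialOrder P] (ρ : P → ℕ) {k : ℕ} (f : Fin (k+1) → P)
    (hρf : ∀ i : Fin k, ρ (f i.castSucc) < ρ (f i.succ)) :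
    ((∑ i : Fin k, (ρ (f i.succ) - ρ (f i.castSucc) - 1) : ℕ) : ℤ)
      = (ρ (f (Fin.last k)) : ℤ) - (ρ (f 0) : ℤ) - k := by
  have F : ℕ → ℤ := fun j => (ρ (f ⟨min j k, Nat.lt_succ_of_le (min_le_right j k)⟩) : ℤ)
  set F : ℕ → ℤ := fun j => (ρ (f ⟨min j k, Nat.lt_succ_of_le (min_le_right j k)⟩) : ℤ)
    with hF
  have hterm : ∀ i : Fin k, ((ρ (f i.succ) - ρ (f i.castSucc) - 1 : ℕ) : ℤ)
      = (F ((i : ℕ) + 1) - F (i : ℕ)) - 1 := by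
    intro i
    have h1 : f i.succ = f ⟨min ((i : ℕ)+1) k, Nat.lt_succ_of_le (min_le_right _ k)⟩ := by
      refine congrArg f (Fin.ext ?_)
      have := i.2
      simp only [Fin.val_succ]
      omega
    have h2 : f i.castSucc = f ⟨min (i : ℕ) k, Nat.lt_succ_of_le (min_le_right _ k)⟩ := by
      refine congrArg f (Fin.ext ?_)
      have := i.2
      simp only [Fin.coe_castSucc]
      omega
    have hlt := hρf i
    rw [hF]
    simp only []
    rw [← h1, ← h2]
    omega
  rw [Nat.cast_sum, Finset.sum_congr rfl (fun i _ => hterm i), Finset.sum_sub_distrib,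
    Fin.sum_univ_eq_sum_range (fun j => F (j + 1) - F j) k, Finset.sum_range_sub F k,
    Finset.sum_const, Finset.card_univ, Fintype.card_fin]
  have hFk : F k = (ρ (f (Fin.last k)) : ℤ) := by
    simp only [hF]
    exact congrArg (fun z : P => ((ρ z : ℕ) : ℤ))
      (congrArg f (Fin.ext (by simp [Fin.last])))
  have hF0 : F 0 = (ρ (f 0) : ℤ) := by
    simp only [hF]
    exact congrArg (fun z : P => ((ρ z : ℕ) : ℤ))
      (congrArg f (Fin.ext (by simp)))
  rw [hFk, hF0]
  ring

lemma lambdabar_wtChain {P : Type} [PartialOrder P] (ρ : P → ℕ) (n : ℕ) {k : ℕ}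
    (f : Fin (k+1) → P)
    (hρf : ∀ i : Fin k, ρ (f i.castSucc) < ρ (f i.succ))
    (h0 : ρ (f 0) = 0) (hl : ρ (f (Fin.last k)) = n + 1) (hk : 1 ≤ k) :
    lambdabar (wtChain ρ f) = ((-1 : ℤ) ^ (n+1) * (-1) ^ k) • (va - vb) ^ n := by
  set e : Fin k → ℕ := fun i => ρ (f i.succ) - ρ (f i.castSucc) - 1 with he
  set b : Fin k → ℕ := fun i => e i + (if (i : ℕ) + 1 < k then 1 else 0) with hb
  have hfac : ∀ i : Fin k,
      lambdabar ((va - vb) ^ (ρ (f i.succ) - ρ (f i.castSucc) - 1) *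
        (if (i : ℕ) + 1 < k then vb else 1))
      = ((-1 : ℤ) ^ (e i)) • (va - vb) ^ (b i) := by
    intro i
    rw [map_mul, map_pow, map_sub, lambdabar_va, lambdabar_vb, zero_sub, neg_pow_zsmul,
      apply_ite lambdabar, map_one, lambdabar_vb]
    by_cases hc : (i : ℕ) + 1 < k
    · rw [if_pos hc, smul_mul_assoc, ← pow_succ]
      have : b i = e i + 1 := by rw [hb]; simp [hc]
      rw [this]
    · rw [if_neg hc, mul_one]
      have : b i = e i := by rw [hb]; simp [hc]
      rw [this]
  rw [wtChain, map_list_prod, List.map_ofFn]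
  rw [show (⇑lambdabar ∘ fun i : Fin k =>
      (va - vb) ^ (ρ (f i.succ) - ρ (f i.castSucc) - 1) *
        (if (i : ℕ) + 1 < k then vb else 1))
    = fun i => ((-1 : ℤ) ^ (e i)) • (va - vb) ^ (b i) from funext hfac]
  rw [show (List.ofFn fun i : Fin k => ((-1 : ℤ) ^ (e i)) • (va - vb) ^ (b i))
      = (List.ofFn fun i : Fin k => ((((-1 : ℤ) ^ (e i)), b i) : ℤ × ℕ)).map
        (fun p => p.1 • (va - vb) ^ p.2) from by rw [List.map_ofFn]; rfl]
  rw [list_prod_zsmul_pow, List.map_ofFn, List.map_ofFn]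
  have hmapfst : ((fun p : ℤ × ℕ => p.1) ∘ fun i : Fin k => ((((-1 : ℤ) ^ (e i)), b i) : ℤ × ℕ))
      = fun i : Fin k => (-1 : ℤ) ^ (e i) := rfl
  have hmapsnd : ((fun p : ℤ × ℕ => p.2) ∘ fun i : Fin k => ((((-1 : ℤ) ^ (e i)), b i) : ℤ × ℕ))
      = fun i : Fin k => b i := rfl
  rw [hmapfst, hmapsnd, List.prod_ofFn, List.sum_ofFn, Finset.prod_pow_eq_pow_sum]
  have hS : ((∑ i, e i : ℕ) : ℤ) = (n : ℤ) + 1 - k := by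
    rw [he, sum_rho_gaps ρ f hρf, h0, hl]
    push_cast
    ring
  have hSk : (∑ i, e i) + k = n + 1 := by omega
  have hbsum : ∑ i, b i = (∑ i, e i) + (k - 1) := by
    rw [hb, Finset.sum_add_distrib, sum_ite_lt k hk]
  have hexp : ∑ i, b i = n := by omega
  have hsign : ((-1 : ℤ)) ^ (∑ i, e i) = (-1) ^ (n+1) * (-1) ^ k := by
    have h1 : ((-1 : ℤ)) ^ ((∑ i, e i) + k) = (-1) ^ (n+1) := by rw [hSk]
    rw [pow_add] at h1
    have h2 : ((-1 : ℤ)) ^ k * (-1) ^ k = 1 := by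
      rw [← pow_add]
      exact Even.neg_one_pow ⟨k, rfl⟩
    calc ((-1 : ℤ)) ^ (∑ i, e i)
        = (-1) ^ (∑ i, e i) * ((-1) ^ k * (-1) ^ k) := by rw [h2, mul_one]
      _ = (-1) ^ (n+1) * (-1) ^ k := by rw [← mul_assoc, h1]
  rw [hexp, hsign]

section Poset2

variable {P : Type} [Fintype P] [PartialOrder P]

lemma lambdabar_PsiI (ρ : P → ℕ) (n : ℕ) (hrho : ∀ y x : P, x < y → ρ x < ρ y)
    (lo hi : P) (hlo : ρ lo = 0) (hhi : ρ hi = n + 1) :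
    lambdabar (PsiI ρ (fun _ _ => (1 : ℤ)) lo hi)
      = (Hfun lo hi * (-1 : ℤ) ^ (n+1)) • (va - vb) ^ n := by
  rw [PsiI, map_sum]
  have hstep : ∀ k ∈ Finset.range (Fintype.card P + 1),
      lambdabar (∑ f : Fin (k+1) → P,
        if StrictMono f ∧ f 0 = lo ∧ f (Fin.last k) = hi
        then zetaChain (fun _ _ => (1 : ℤ)) f • wtChain ρ f else 0)
      = chainSum lo hi k • (((-1 : ℤ)) ^ (n+1) • (va - vb) ^ n) := by
    intro k _
    rw [chainSum, Finset.sum_smul, map_sum]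
    refine Finset.sum_congr rfl fun f _ => ?_
    by_cases hC : StrictMono f ∧ f 0 = lo ∧ f (Fin.last k) = hi
    · rw [if_pos hC, if_pos hC]
      have hz : zetaChain (fun _ _ => (1 : ℤ)) f = 1 := by simp [zetaChain]
      rw [hz, one_smul]
      have hk : 1 ≤ k := by
        by_contra hcon
        have hk0 : k = 0 := by omega
        subst hk0
        have hlohi : lo = hi := by
          rw [← hC.2.1, ← hC.2.2]
          exact (congrArg f fin_last_zero_eq).symm
        rw [hlohi, hhi] at hlo
        omega
      have hρf : ∀ i : Fin k, ρ (f i.castSucc) < ρ (f i.succ) := fun i =>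
        hrho _ _ (hC.1 Fin.castSucc_lt_succ)
      rw [lambdabar_wtChain ρ n f hρf (by rw [hC.2.1, hlo]) (by rw [hC.2.2, hhi]) hk]
      rw [smul_smul, mul_comm]
    · rw [if_neg hC, if_neg hC, map_zero, zero_smul]
  rw [Finset.sum_congr rfl hstep, ← Finset.sum_smul]
  rw [show (∑ k ∈ Finset.range (Fintype.card P + 1), chainSum lo hi k) = Hfun lo hi from rfl]
  rw [smul_smul]

end Poset2

end AuxLemmas

/-- `λ̄(Ψ(P)) = (-1)^{n+1} μ(0̂,1̂) (a-b)^n` for a graded poset of rank `n+1`. -/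
theorem lambdabar_abIndex {P : Type} [Fintype P] [PartialOrder P] [BoundedOrder P]
    [DecidableEq P] [LocallyFiniteOrder P]
    (n : ℕ) (ρ : P → ℕ) (hbot : ρ ⊥ = 0) (htop : ρ ⊤ = n + 1)
    (hgrade : ∀ x y : P, x ⋖ y → ρ y = ρ x + 1) :
    lambdabar (PsiI ρ (fun _ _ => (1 : ℤ)) ⊥ ⊤)
      = ((-1 : ℤ) ^ (n + 1) * IncidenceAlgebra.mu ℤ (⊥ : P) ⊤) • (va - vb) ^ n := by
  rw [lambdabar_PsiI ρ n (rho_strict ρ hgrade) ⊥ ⊤ hbot htop,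
    Hfun_eq_mu ⊥ ⊤ bot_le, mul_comm]
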